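/- The horocycle-only packing density function g(a) = F(a,0) (from the general planar hyp-hor density formula with y = 0), defined for 1/√2 ≤ a < 1, attains its maximum on [1/√2, 1) at a = 1/√2, with value (4·sinh((1/2)·arccosh((1+2a²)/(2a²))) evaluated at a = 1/√2 divided by π) ≈ 0.90032. -/

import Mathlib

open Real

/-- The inverse hyperbolic cosine on [1,∞). -/
noncomputable def arcosh (x : ℝ) : ℝ := Real.log (x + Real.sqrt (x^2 - 1))

/-- The density function of the pure horocycle packings `P_a(0)`,
obtained from the general planar hyp-hor density formula by setting `y = 0`. -/
noncomputable def g (a : ℝ) : ℝ :=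
  4 * Real.sinh ((1/2) * _root_.arcosh ((1 + 2*a^2) / (2*a^2))) / π

lemma g_eq {a : ℝ} (ha : 0 < a) : g a = 2 / (π * a) := by
  have ha2 : (0:ℝ) < 2 * a ^ 2 := by positivity
  set x : ℝ := (1 + 2*a^2) / (2*a^2) with hx
  have hx1 : 1 < x := by rw [hx, lt_div_iff₀ ha2]; nlinarith
  have hd2 : Real.sqrt (x^2 - 1) ^ 2 = x^2 - 1 := Real.sq_sqrt (by nlinarith)
  set d := Real.sqrt (x^2 - 1) with hdd
  have hd0 : 0 ≤ d := Real.sqrt_nonneg _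
  set s := x + d with hs
  have hs1 : 1 ≤ s := by nlinarith
  have hs0 : 0 < s := by linarith
  have hsinv : s * (x - d) = 1 := by nlinarith
  have hr2 : Real.sqrt s ^ 2 = s := Real.sq_sqrt hs0.le
  set r := Real.sqrt s with hrr
  have hr0 : 0 < r := Real.sqrt_pos.mpr hs0
  have hr1 : 1 ≤ r := by nlinarith
  have hrne : r ≠ 0 := hr0.ne'
  have hlog : (1/2 : ℝ) * _root_.arcosh x = Real.log r := by
    rw [_root_.arcosh, ← hdd, ← hs, ← hr2, Real.log_pow]
    push_cast; ring
  have hsinh : Real.sinh ((1/2) * _root_.arcosh x) = (r - r⁻¹) / 2 := by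
    rw [hlog, Real.sinh_log hr0]
  have hri : r⁻¹ ^ 2 = x - d := by
    have hsi : s⁻¹ = x - d := by
      field_simp
      linarith [hsinv]
    rw [inv_pow, hr2, hsi]
  have hxv : 2 * x - 2 = (1/a)^2 := by
    rw [hx]; field_simp; ring
  have h1 : (r - r⁻¹)^2 = (1/a)^2 := by
    have hexp : (r - r⁻¹)^2 = r^2 - 2 + r⁻¹^2 := by
      field_simp; ring
    rw [hexp, hr2, hri]
    rw [hs]; linarith [hxv]
  have h2 : 0 ≤ r - r⁻¹ := by
    have : r⁻¹ ≤ 1 := by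
      rw [inv_le_one_iff₀]; right; exact hr1
    linarith
  have hval : r - r⁻¹ = 1 / a := by
    have := Real.sqrt_sq h2
    rw [← this, h1, Real.sqrt_sq (by positivity)]
  rw [g, ← hx, hsinh, hval]
  field_simp
  ring

/-- On `[1/√2, 1)` the horocycle-only density `g` attains its maximum at
`a = 1/√2`, with value `≈ 0.90032`. -/
theorem horocycle_density_max :
    (∀ a : ℝ, 1 / Real.sqrt 2 ≤ a → a < 1 → g a ≤ g (1 / Real.sqrt 2)) ∧
      |g (1 / Real.sqrt 2) - 0.90032| < 0.0001 := by
  have hs2 : (0:ℝ) < Real.sqrt 2 := Real.sqrt_pos.mpr (by norm_num)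
  have hinv : (0:ℝ) < 1 / Real.sqrt 2 := by positivity
  have hsq : Real.sqrt 2 ^ 2 = 2 := Real.sq_sqrt (by norm_num)
  have hlo : (1.414213:ℝ) < Real.sqrt 2 := by nlinarith
  have hhi : Real.sqrt 2 < 1.414214 := by nlinarith
  have hπ : (3.141592:ℝ) < π := pi_gt_d6
  have hπ' : π < 3.141593 := pi_lt_d6
  have hπ0 : 0 < π := pi_pos
  have hg2 : g (1 / Real.sqrt 2) = 2 * Real.sqrt 2 / π := by
    rw [g_eq hinv]
    field_simp
  constructor
  · intro a ha1 ha2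
    have ha0 : 0 < a := lt_of_lt_of_le hinv ha1
    rw [g_eq ha0, g_eq hinv]
    gcongr
  · rw [hg2, abs_lt]
    have k1 : 2 * Real.sqrt 2 / π < 0.90042 := by
      rw [div_lt_iff₀ hπ0]; nlinarith
    have k2 : (0.90022:ℝ) < 2 * Real.sqrt 2 / π := by
      rw [lt_div_iff₀ hπ0]; nlinarith
    constructor <;> linarith
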